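/- Let h > 0, r = (3h)^{-1/2}, y* = (2/3)·r, T(x) = x - h·x³, and define p₁(y) = Σ_{x ∈ T⁻¹({y})} φ(x)/|1 - 3h·x²| for y with T⁻¹({y}) containing no critical point of T. Then p₁(y) tends to +∞ as y tends to y* from the left, while p₁(y) tends to the finite positive limit φ(-2r)/3 as y tends to y* from the right. In particular p₁ has a (blow-up) discontinuity at y*. -/

import Mathlib

open Filter

private lemma preimage_cubic_finite (h y : ℝ) (hh : 0 < h) :
    ((fun x : ℝ => x - h * x ^ 3) ⁻¹' {y}).Finite := by
  have hp : (Polynomial.C h * Polynomial.X ^ 3 - Polynomial.X + Polynomial.C y :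
      Polynomial ℝ) ≠ 0 := by
    intro hc
    have := congrArg (fun p => Polynomial.coeff p 3) hc
    simp [Polynomial.coeff_X] at this
    exact hh.ne' this
  have := Polynomial.finite_setOf_isRoot hp
  apply this.subset
  intro x hx
  simp only [Set.mem_preimage, Set.mem_singleton_iff] at hx
  simp [Polynomial.IsRoot, Set.mem_setOf_eq]
  linarith [hx]

set_option maxHeartbeats 2000000 in
/-- Let `h > 0`, `r = (3h)^(-1/2)`, `y* = (2/3) r`, and
`T x = x - h x³`. With `φ` the standard Gaussian density and
`p₁ y = ∑_{x ∈ T⁻¹{y}} φ x / |1 - 3 h x²|` (the change-of-variables density,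
valid at every `y` whose preimage contains no critical point of `T`),
`p₁ y → +∞` as `y → y*⁻`, while `p₁ y → φ(-2r)/3 > 0` as `y → y*⁺`.
In particular `p₁` has a blow-up discontinuity at `y*`. -/
theorem forwardEuler_pushforward_density_blowup
    (h : ℝ) (hh : 0 < h) (r : ℝ) (hr : r = (Real.sqrt (3 * h))⁻¹) :
    Tendsto
      (fun y : ℝ => ∑' x : ((fun x : ℝ => x - h * x ^ 3) ⁻¹' {y}),
        (Real.sqrt (2 * Real.pi))⁻¹ * Real.exp (-(x : ℝ) ^ 2 / 2) /
          |1 - 3 * h * (x : ℝ) ^ 2|)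
      (nhdsWithin (2 / 3 * r) (Set.Iio (2 / 3 * r))) atTop ∧
    Tendsto
      (fun y : ℝ => ∑' x : ((fun x : ℝ => x - h * x ^ 3) ⁻¹' {y}),
        (Real.sqrt (2 * Real.pi))⁻¹ * Real.exp (-(x : ℝ) ^ 2 / 2) /
          |1 - 3 * h * (x : ℝ) ^ 2|)
      (nhdsWithin (2 / 3 * r) (Set.Ioi (2 / 3 * r)))
      (nhds ((Real.sqrt (2 * Real.pi))⁻¹ * Real.exp (-(-2 * r) ^ 2 / 2) / 3)) := by
  have hT : ∀ x : ℝ, (fun x : ℝ => x - h * x ^ 3) x = x - h * x ^ 3 := fun _ => rfl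
  set T : ℝ → ℝ := fun x => x - h * x ^ 3
  set f : ℝ → ℝ := fun x =>
    (Real.sqrt (2 * Real.pi))⁻¹ * Real.exp (-x ^ 2 / 2) / |1 - 3 * h * x ^ 2| with hf
  -- basic facts
  have h3h : (0:ℝ) < 3 * h := by linarith
  have hs : Real.sqrt (3 * h) > 0 := Real.sqrt_pos.2 h3h
  have hr0 : 0 < r := by rw [hr]; positivity
  have hr2 : 3 * h * r ^ 2 = 1 := by
    rw [hr, inv_pow, ← Real.sq_sqrt h3h.le]
    field_simp
    rw [Real.sqrt_sq hs.le]
  -- key identity : y* - T x = h (x - r)² (x + 2r)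
  have key : ∀ x : ℝ, 2 / 3 * r - T x = h * (x - r) ^ 2 * (x + 2 * r) := by
    intro x
    rw [hT]
    nlinarith [hr2, sq_nonneg x, sq_nonneg r]
  have hTr : T r = 2 / 3 * r := by
    have := key r; simp at this; linarith
  -- continuity of T
  have hTc : Continuous T := by
    have : Continuous fun x : ℝ => x - h * x ^ 3 := by continuity
    exact this
  -- strict antitonicity of T on Iic (-r)
  have hderiv : ∀ x : ℝ, HasDerivAt T (1 - 3 * h * x ^ 2) x := by
    intro x
    have h1 : HasDerivAt (fun x : ℝ => x - h * x ^ 3)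
        (1 - h * (3 * x ^ 2)) x := by
      have := (hasDerivAt_pow 3 x).const_mul h
      refine ((hasDerivAt_id' x).sub this).congr_deriv ?_
      norm_num
    convert h1 using 1
    ring
  have hanti : StrictAntiOn T (Set.Iic (-r)) := by
    apply strictAntiOn_of_deriv_neg (convex_Iic _) hTc.continuousOn
    intro x hx
    rw [interior_Iic] at hx
    rw [(hderiv x).deriv]
    have hx' : x < -r := hx
    nlinarith
  -- nonnegativity of f
  have hfnn : ∀ x : ℝ, 0 ≤ f x := by
    intro x
    apply div_nonneg _ (abs_nonneg _)
    positivity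
  constructor
  · -- LEFT LIMIT : blow-up
    rw [tendsto_atTop]
    intro M
    set φmin : ℝ := (Real.sqrt (2 * Real.pi))⁻¹ * Real.exp (-(r + 1) ^ 2 / 2) with hφmin
    have hφminpos : 0 < φmin := by positivity
    set M' := max M 1 with hM'
    have hM'pos : (0:ℝ) < M' := lt_of_lt_of_le one_pos (le_max_right _ _)
    set ε₀ : ℝ := φmin / M' with hε₀
    have hε₀pos : 0 < ε₀ := by positivity
    set δ : ℝ := min 1 (ε₀ / (3 * h * (2 * r + 1))) with hδ
    have hδpos : 0 < δ := lt_min one_pos (by positivity)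
    have hδ1 : δ ≤ 1 := min_le_left _ _
    -- on (r, r + δ), the denominator is small
    have hden : ∀ x : ℝ, r < x → x < r + δ → 3 * h * x ^ 2 - 1 ≤ ε₀ := by
      intro x hx1 hx2
      have hδ2 : δ ≤ ε₀ / (3 * h * (2 * r + 1)) := min_le_right _ _
      have h2r : (0:ℝ) < 3 * h * (2 * r + 1) := by positivity
      have : δ * (3 * h * (2 * r + 1)) ≤ ε₀ := by
        rw [← le_div_iff₀ h2r]; exact hδ2
      nlinarith [hr2]
    -- T (r + δ) < y*
    have hTrδ : T (r + δ) < 2 / 3 * r := by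
      have hk := key (r + δ)
      have h2 : 0 < h * δ ^ 2 * (3 * r + δ) := by positivity
      nlinarith
    filter_upwards [Ioo_mem_nhdsLT_of_mem
      (show (2:ℝ)/3*r ∈ Set.Ioc (T (r+δ)) (2/3*r) from ⟨hTrδ, le_refl _⟩)] with y hy
    -- there is a root in (r, r + δ)
    obtain ⟨xp, hxpmem, hxp⟩ := intermediate_value_Ioo' (by linarith : r ≤ r + δ)
      hTc.continuousOn (show y ∈ Set.Ioo (T (r+δ)) (T r) by rw [hTr]; exact hy)
    have hxp1 : r < xp := hxpmem.1
    have hxp2 : xp < r + δ := hxpmem.2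
    -- f xp is large
    have hd1 : 0 < 3 * h * xp ^ 2 - 1 := by nlinarith [hr2]
    have habs : |1 - 3 * h * xp ^ 2| = 3 * h * xp ^ 2 - 1 := by
      rw [abs_of_nonpos (by linarith)]; ring
    have hφx : φmin ≤ (Real.sqrt (2 * Real.pi))⁻¹ * Real.exp (-xp ^ 2 / 2) := by
      apply mul_le_mul_of_nonneg_left _ (by positivity)
      apply Real.exp_le_exp.2
      have : xp ≤ r + 1 := by linarith
      nlinarith [hr0]
    have hfx : M ≤ f xp := by
      have hMeq : φmin / ε₀ = M' := by
        rw [hε₀]; field_simp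
      have h1 : φmin / ε₀ ≤ f xp := by
        rw [hf]
        simp only
        rw [habs]
        exact div_le_div₀ (by positivity) hφx hd1 (hden xp hxp1 hxp2)
      rw [hMeq] at h1
      exact le_trans (le_max_left _ _) h1
    -- tsum bound
    have hfin : (T ⁻¹' {y}).Finite := preimage_cubic_finite h y hh
    haveI : Finite (T ⁻¹' {y}) := hfin.to_subtype
    have hxpmem' : xp ∈ T ⁻¹' {y} := by
      simp [Set.mem_preimage, hxp]
    have hsum : Summable (fun x : (T ⁻¹' {y}) => f (x : ℝ)) := Summable.of_finite
    calc M ≤ f xp := hfx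
      _ ≤ ∑' x : (T ⁻¹' {y}), f (x : ℝ) :=
          Summable.le_tsum hsum ⟨xp, hxpmem'⟩ fun j _ => hfnn j
      _ = _ := rfl
  · -- RIGHT LIMIT
    rw [Metric.tendsto_nhds]
    intro ε hε
    -- continuity of f at -2r
    have hdenval : 3 * h * (-(2*r)) ^ 2 = 4 := by linear_combination 4 * hr2
    have habs2r : |1 - 3 * h * (-(2*r)) ^ 2| = 3 := by
      rw [hdenval]; norm_num
    have hnum : Continuous fun x : ℝ => (Real.sqrt (2 * Real.pi))⁻¹ * Real.exp (-x ^ 2 / 2) :=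
      continuous_const.mul (Real.continuous_exp.comp ((continuous_pow 2).neg.div_const 2))
    have hden2 : Continuous fun x : ℝ => |1 - 3 * h * x ^ 2| :=
      (continuous_const.sub (continuous_const.mul (continuous_pow 2))).abs
    have hcont : ContinuousAt f (-(2*r)) := by
      apply ContinuousAt.div hnum.continuousAt hden2.continuousAt
      rw [habs2r]; norm_num
    have hLval : f (-(2*r)) =
        (Real.sqrt (2 * Real.pi))⁻¹ * Real.exp (-(-2 * r) ^ 2 / 2) / 3 := by
      rw [hf]
      simp only
      rw [habs2r]
      norm_num
    obtain ⟨δ, hδpos, hδ⟩ := Metric.continuousAt_iff.1 hcont ε hε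
    -- T (-2r - δ) > y*
    have hTa : 2 / 3 * r < T (-(2*r) - δ) := by
      have hk := key (-(2*r) - δ)
      have hsq : (0:ℝ) < (-(2*r) - δ - r) ^ 2 := by
        have he : (-(2*r) - δ - r) ^ 2 = (3*r + δ) ^ 2 := by ring
        rw [he]; positivity
      have h2 : 0 < h * (-(2*r) - δ - r) ^ 2 * δ := mul_pos (mul_pos hh hsq) hδpos
      have e : h * (-(2*r) - δ - r) ^ 2 * (-(2*r) - δ + 2*r)
          = -(h * (-(2*r) - δ - r) ^ 2 * δ) := by ring
      linarith [hk, h2, e]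
    filter_upwards [Ioo_mem_nhdsGT_of_mem
      (show (2:ℝ)/3*r ∈ Set.Ico (2/3*r) (T (-(2*r) - δ)) from ⟨le_refl _, hTa⟩)] with y hy
    -- existence of the root
    obtain ⟨x₀, hx₀mem, hx₀⟩ := intermediate_value_Ioo' (by linarith : -(2*r) - δ ≤ -(2*r))
      hTc.continuousOn (show y ∈ Set.Ioo (T (-(2*r))) (T (-(2*r) - δ)) by
        constructor
        · have : T (-(2*r)) = 2/3*r := by
            have hk := key (-(2*r)); nlinarith
          rw [this]; exact hy.1
        · exact hy.2)
    -- every root is < -2r, hence equals x₀ by strict antitonicity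
    have hroot_lt : ∀ x : ℝ, T x = y → x < -(2*r) := by
      intro x hx
      by_contra hcon
      push_neg at hcon
      have hk := key x
      have h2 : 0 ≤ h * (x - r) ^ 2 * (x + 2*r) :=
        mul_nonneg (mul_nonneg hh.le (sq_nonneg _)) (by linarith)
      have : y ≤ 2/3*r := by linarith [hx ▸ hk]
      linarith [hy.1]
    have hset : T ⁻¹' {y} = {x₀} := by
      ext x
      simp only [Set.mem_preimage, Set.mem_singleton_iff]
      constructor
      · intro hx
        have hx' : x < -(2*r) := hroot_lt x hx
        have hx₀' : x₀ < -(2*r) := hroot_lt x₀ hx₀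
        have hm1 : x ∈ Set.Iic (-r) := by
          simp only [Set.mem_Iic]; linarith
        have hm2 : x₀ ∈ Set.Iic (-r) := by
          simp only [Set.mem_Iic]; linarith
        exact hanti.injOn hm1 hm2 (by rw [hx, hx₀])
      · intro hx; rw [hx, hx₀]
    -- rewrite the tsum as a single term
    have htsum : (∑' x : (T ⁻¹' {y}), f (x : ℝ)) = f x₀ := by
      rw [hset]
      exact tsum_eq_single (⟨x₀, rfl⟩ : ({x₀} : Set ℝ))
        (fun b hb => absurd (Subtype.ext (Set.mem_singleton_iff.mp b.2)) hb) |>.trans rfl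
    show dist (∑' x : (T ⁻¹' {y}), f (x : ℝ)) _ < ε
    rw [htsum, ← hLval]
    apply hδ
    rw [Real.dist_eq]
    have h1 : x₀ - -(2*r) < 0 := by linarith [hx₀mem.2]
    have h2 : -(2*r) - δ < x₀ := hx₀mem.1
    rw [abs_of_neg h1]
    linarith
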